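/- Let d ≥ 1 and g be integers, and let S be an additive subsemigroup of ℕ × ℤ such that: (i) the subgroup of ℤ × ℤ generated by S is all of ℤ × ℤ; (ii) there is a constant C with |s| ≤ Cn for every (n,s) ∈ S with n ≥ 1; (iii) there is n₀ ≥ 1 such that for every n ≥ n₀ the slice S_n := { s ∈ ℤ : (n,s) ∈ S } is finite of cardinality dn − g + 1. Let s_min = lim (min S_n)/n and s_max = lim (max S_n)/n (these limits exist and s_max = s_min + d). Then the discrete probability measures η_n := (1/|S_n|) Σ_{s ∈ S_n} δ_{s/n} converge weakly, as n → ∞, to the normalized Lebesgue measure on the interval [s_min, s_max]; that is, for every bounded continuous function φ : ℝ → ℝ, lim_{n→∞} (1/|S_n|) Σ_{s ∈ S_n} φ(s/n) = (1/d) ∫_{s_min}^{s_max} φ(x) dx. -/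

import Mathlib

open Filter

/-- The `n`-th slice of a subset `S ⊆ ℕ × ℤ`. -/
def sgSlice (S : Set (ℕ × ℤ)) (n : ℕ) : Set ℤ := {s : ℤ | (n, s) ∈ S}

/-- The `n`-th slice viewed as a set of real numbers. -/
def sgSliceR (S : Set (ℕ × ℤ)) (n : ℕ) : Set ℝ := (fun s : ℤ => (s : ℝ)) '' sgSlice S n

/-- Let `S ⊆ ℕ × ℤ` be an additive subsemigroup which generates
`ℤ × ℤ` as a group, has linearly bounded slices, and whose `n`-th slice has
cardinality `d·n - g + 1` for all large `n`. Let `s_min = lim (min S_n)/n` and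
`s_max = lim (max S_n)/n`. Then the uniform probability measures on the
normalized slices `{ s/n : s ∈ S_n }` converge weakly to the normalized Lebesgue
measure on `[s_min, s_max]`: for every bounded continuous `φ : ℝ → ℝ`,
`(1/|S_n|) Σ_{s ∈ S_n} φ(s/n) → (1/d) ∫_{s_min}^{s_max} φ`. -/
lemma aux_eps (Mb ε : ℝ) (hMb0 : 0 ≤ Mb) (hε : 0 < ε) :
    Mb * (ε/(8*(Mb+1))) + Mb * (ε/(8*(Mb+1))) ≤ ε/4 := by
  have hMb1 : (0:ℝ) < Mb + 1 := by linarith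
  have heq : Mb * (ε/(8*(Mb+1))) + Mb * (ε/(8*(Mb+1))) = ε/4 * (Mb/(Mb+1)) := by
    field_simp; ring
  rw [heq]
  have h2 : Mb/(Mb+1) ≤ 1 := by rw [div_le_one hMb1]; linarith
  calc ε/4 * (Mb/(Mb+1)) ≤ ε/4 * 1 := mul_le_mul_of_nonneg_left h2 (by linarith)
    _ = ε/4 := mul_one _

set_option maxHeartbeats 1000000 in
lemma riemann_tendsto (φ : ℝ → ℝ) (hφc : Continuous φ) (Mb : ℝ) (hMb : ∀ x, |φ x| ≤ Mb)
    (α β : ℝ) (m M : ℕ → ℤ)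
    (hm : Tendsto (fun n : ℕ => (m n : ℝ)/n) atTop (nhds α))
    (hM : Tendsto (fun n : ℕ => (M n : ℝ)/n) atTop (nhds β))
    (hle : ∀ᶠ n in atTop, m n ≤ M n) :
    Tendsto (fun n : ℕ => (1/(n:ℝ)) * ∑ s ∈ Finset.Icc (m n) (M n), φ ((s:ℝ)/n))
      atTop (nhds (∫ x in α..β, φ x)) := by
  have hMb0 : 0 ≤ Mb := (abs_nonneg _).trans (hMb 0)
  have hαβ : α ≤ β := by
    refine le_of_tendsto_of_tendsto hm hM ?_
    filter_upwards [hle, eventually_gt_atTop 0] with n hn hn1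
    have hmM : (m n : ℝ) ≤ (M n : ℝ) := by exact_mod_cast hn
    have hn0 : (0:ℝ) < n := by exact_mod_cast hn1
    gcongr
  rw [Metric.tendsto_nhds]
  intro ε hε
  -- uniform continuity on K
  have hK : IsCompact (Set.Icc (α - 1) (β + 1)) := isCompact_Icc
  have hUC := hK.uniformContinuousOn_of_continuous hφc.continuousOn
  rw [Metric.uniformContinuousOn_iff] at hUC
  have hden : (0:ℝ) < β - α + 2 := by linarith
  have hε₁ : (0:ℝ) < ε / (3 * (β - α + 2)) := by positivity
  set ε₁ := ε / (3 * (β - α + 2)) with hε₁def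
  obtain ⟨δ, hδ0, hδ⟩ := hUC ε₁ hε₁
  have hε₂ : (0:ℝ) < ε / (8 * (Mb + 1)) := by positivity
  set ε₂ := ε / (8 * (Mb + 1)) with hε₂def
  -- eventual facts
  have hev1 : ∀ᶠ n : ℕ in atTop, (1:ℝ)/n < δ ∧ (1:ℝ)/n ≤ 1 := by
    have h : Tendsto (fun n : ℕ => 1 / (n:ℝ)) atTop (nhds 0) := tendsto_one_div_atTop_nhds_zero_nat
    rw [Metric.tendsto_nhds] at h
    filter_upwards [h δ hδ0, h 1 one_pos] with n h1 h2
    have e1 : (1:ℝ)/n < δ := by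
      have := h1; rw [Real.dist_eq] at this
      calc (1:ℝ)/n ≤ |1/(n:ℝ) - 0| := by rw [sub_zero]; exact le_abs_self _
        _ < δ := this
    have e2 : (1:ℝ)/n < 1 := by
      have := h2; rw [Real.dist_eq] at this
      calc (1:ℝ)/n ≤ |1/(n:ℝ) - 0| := by rw [sub_zero]; exact le_abs_self _
        _ < 1 := this
    exact ⟨e1, le_of_lt e2⟩
  have hevm : ∀ᶠ n : ℕ in atTop, |(m n : ℝ)/n - α| < min 1 ε₂ := by
    rw [Metric.tendsto_nhds] at hm
    filter_upwards [hm (min 1 ε₂) (lt_min one_pos hε₂)] with n h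
    simpa [Real.dist_eq] using h
  have hevM : ∀ᶠ n : ℕ in atTop, |((M n : ℝ)+1)/n - β| < min 1 ε₂ := by
    have hM' : Tendsto (fun n : ℕ => ((M n : ℝ)+1)/n) atTop (nhds β) := by
      have : Tendsto (fun n : ℕ => (M n : ℝ)/n + 1/n) atTop (nhds (β + 0)) :=
        hM.add tendsto_one_div_atTop_nhds_zero_nat
      simpa [add_div] using this
    rw [Metric.tendsto_nhds] at hM'
    filter_upwards [hM' (min 1 ε₂) (lt_min one_pos hε₂)] with n h
    simpa [Real.dist_eq] using h
  filter_upwards [hev1, hevm, hevM, hle, eventually_gt_atTop 0] with n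
    ⟨hδn, h1n⟩ hmn hMn hmM hn0
  have hn0' : (0:ℝ) < n := by exact_mod_cast hn0
  -- setup
  set N := (M n - m n + 1).toNat with hNdef
  have hN : (N : ℤ) = M n - m n + 1 := Int.toNat_of_nonneg (by omega)
  have hNR : (N : ℝ) = (M n : ℝ) - (m n : ℝ) + 1 := by exact_mod_cast hN
  set a : ℕ → ℝ := fun i => ((m n : ℝ) + i)/n with hadef
  -- reindex sum
  have hsum : ∑ s ∈ Finset.Icc (m n) (M n), φ ((s:ℝ)/n)
      = ∑ i ∈ Finset.range N, φ (a i) := by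
    refine Finset.sum_nbij' (fun s => (s - m n).toNat) (fun i => m n + i) ?_ ?_ ?_ ?_ ?_
    · intro s hs
      simp only [Finset.mem_Icc] at hs
      simp only [Finset.mem_range]
      omega
    · intro i hi
      simp only [Finset.mem_range] at hi
      simp only [Finset.mem_Icc]
      omega
    · intro s hs
      simp only [Finset.mem_Icc] at hs
      omega
    · intro i hi
      simp only [Finset.mem_range] at hi
      omega
    · intro s hs
      simp only [Finset.mem_Icc] at hs
      have h0 : ((s - m n).toNat : ℤ) = s - m n := Int.toNat_of_nonneg (by omega)
      have h' : (((s - m n).toNat : ℕ) : ℝ) = (s:ℝ) - (m n:ℝ) := by exact_mod_cast h0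
      show φ ((s:ℝ)/n) = φ (((m n : ℝ) + (((s - m n).toNat : ℕ) : ℝ))/n)
      rw [h']
      ring_nf
  -- basic facts about the grid
  have hint : ∀ (u v : ℝ), IntervalIntegrable φ MeasureTheory.volume u v :=
    fun u v => hφc.intervalIntegrable u v
  have hstep : ∀ i : ℕ, a (i+1) - a i = 1/n := by
    intro i
    show ((m n : ℝ) + (i+1:ℕ))/n - ((m n : ℝ) + i)/n = 1/n
    push_cast
    ring
  have hmono : ∀ i j : ℕ, i ≤ j → a i ≤ a j := by
    intro i j hij
    show ((m n : ℝ) + i)/n ≤ ((m n : ℝ) + j)/n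
    have hij' : (i:ℝ) ≤ j := by exact_mod_cast hij
    gcongr
  have ha0 : a 0 = (m n : ℝ)/n := by show ((m n : ℝ) + (0:ℕ))/n = _; norm_num
  have haN : a N = ((M n : ℝ)+1)/n := by
    show ((m n : ℝ) + (N:ℕ))/n = _
    rw [hNR]; ring_nf
  have hm_lb : α - 1 < (m n : ℝ)/n := by
    have := (abs_sub_lt_iff.mp hmn).2
    have h1 : (1:ℝ) ⊓ ε₂ ≤ 1 := inf_le_left
    linarith
  have hM_ub : ((M n : ℝ)+1)/n < β + 1 := by
    have := (abs_sub_lt_iff.mp hMn).1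
    have h1 : (1:ℝ) ⊓ ε₂ ≤ 1 := inf_le_left
    linarith
  have haK : ∀ i : ℕ, i ≤ N → a i ∈ Set.Icc (α - 1) (β + 1) := by
    intro i hi
    constructor
    · calc α - 1 ≤ (m n:ℝ)/n := le_of_lt hm_lb
        _ = a 0 := ha0.symm
        _ ≤ a i := hmono 0 i (Nat.zero_le i)
    · calc a i ≤ a N := hmono i N hi
        _ = ((M n : ℝ)+1)/n := haN
        _ ≤ β + 1 := le_of_lt hM_ub
  -- per-term estimate
  have hterm : ∀ i ∈ Finset.range N,
      |(1/(n:ℝ)) * φ (a i) - ∫ x in a i..a (i+1), φ x| ≤ ε₁ * (1/n) := by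
    intro i hi
    rw [Finset.mem_range] at hi
    have hii : a i ≤ a (i+1) := hmono i (i+1) (Nat.le_succ i)
    have key : (1/(n:ℝ)) * φ (a i) - ∫ x in a i..a (i+1), φ x
        = - ∫ x in a i..a (i+1), (φ x - φ (a i)) := by
      rw [intervalIntegral.integral_sub (hint _ _) intervalIntegrable_const,
        intervalIntegral.integral_const, hstep i, smul_eq_mul]
      ring
    rw [key, abs_neg]
    have hb : ∀ x ∈ Set.uIoc (a i) (a (i+1)), ‖φ x - φ (a i)‖ ≤ ε₁ := by
      intro x hx
      rw [Set.uIoc_of_le hii] at hx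
      have hxK : x ∈ Set.Icc (α - 1) (β + 1) := by
        constructor
        · exact le_trans (haK i (le_of_lt hi)).1 (le_of_lt hx.1)
        · exact le_trans hx.2 (haK (i+1) hi).2
      have hdx : dist x (a i) < δ := by
        rw [Real.dist_eq, abs_of_nonneg (by linarith [hx.1.le] : 0 ≤ x - a i)]
        have : x - a i ≤ 1/n := by
          have := hstep i; linarith [hx.2]
        linarith
      have := hδ x hxK (a i) (haK i (le_of_lt hi)) hdx
      rw [Real.dist_eq] at this
      exact le_of_lt this
    have := intervalIntegral.norm_integral_le_of_norm_le_const hb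
    rw [Real.norm_eq_abs] at this
    calc |∫ x in a i..a (i+1), (φ x - φ (a i))| ≤ ε₁ * |a (i+1) - a i| := this
      _ = ε₁ * (1/n) := by rw [hstep i, abs_of_pos (by positivity)]
  -- Riemann sum vs integral over [a 0, a N]
  have hNn : (N : ℝ)/n ≤ β - α + 2 := by
    have : (N:ℝ)/n = ((M n : ℝ)+1)/n - (m n:ℝ)/n := by rw [hNR]; ring
    rw [this]
    linarith
  have hRJ : |(1/(n:ℝ)) * ∑ i ∈ Finset.range N, φ (a i) - ∫ x in (a 0)..a N, φ x| ≤ ε/3 := by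
    rw [← intervalIntegral.sum_integral_adjacent_intervals (fun k _ => hint (a k) (a (k+1)))]
    rw [Finset.mul_sum, ← Finset.sum_sub_distrib]
    calc |∑ i ∈ Finset.range N, ((1/(n:ℝ)) * φ (a i) - ∫ x in a i..a (i+1), φ x)|
        ≤ ∑ i ∈ Finset.range N, |(1/(n:ℝ)) * φ (a i) - ∫ x in a i..a (i+1), φ x| :=
          Finset.abs_sum_le_sum_abs _ _
      _ ≤ ∑ _i ∈ Finset.range N, ε₁ * (1/n) := Finset.sum_le_sum hterm
      _ = (N:ℝ) * (ε₁ * (1/n)) := by rw [Finset.sum_const, Finset.card_range, nsmul_eq_mul]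
      _ = ((N:ℝ)/n) * ε₁ := by ring
      _ ≤ (β - α + 2) * ε₁ := by
          have : (0:ℝ) ≤ ε₁ := le_of_lt hε₁
          exact mul_le_mul_of_nonneg_right hNn this
      _ = ε/3 := by rw [hε₁def]; field_simp
  -- integral over [a 0, a N] vs [α, β]
  have hJI : |(∫ x in (a 0)..a N, φ x) - ∫ x in α..β, φ x| ≤ ε/4 := by
    have h1 : (∫ x in (a 0)..α, φ x) + ∫ x in α..a N, φ x = ∫ x in (a 0)..a N, φ x :=
      intervalIntegral.integral_add_adjacent_intervals (hint _ _) (hint _ _)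
    have h2 : (∫ x in α..β, φ x) + ∫ x in β..a N, φ x = ∫ x in α..a N, φ x :=
      intervalIntegral.integral_add_adjacent_intervals (hint _ _) (hint _ _)
    have hbound : ∀ (u v : ℝ), |∫ x in u..v, φ x| ≤ Mb * |v - u| := by
      intro u v
      have := intervalIntegral.norm_integral_le_of_norm_le_const
        (C := Mb) (a := u) (b := v) (f := φ) (fun x _ => by rw [Real.norm_eq_abs]; exact hMb x)
      rwa [Real.norm_eq_abs] at this
    have e1 : |(∫ x in (a 0)..α, φ x)| ≤ Mb * ε₂ := by
      have h := hbound (a 0) α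
      have : |α - a 0| ≤ ε₂ := by
        rw [ha0]
        rw [abs_sub_comm]
        exact le_of_lt (lt_of_lt_of_le hmn inf_le_right)
      nlinarith [abs_nonneg (α - a 0)]
    have e2 : |(∫ x in β..a N, φ x)| ≤ Mb * ε₂ := by
      have h := hbound β (a N)
      have : |a N - β| ≤ ε₂ := by
        rw [haN]
        exact le_of_lt (lt_of_lt_of_le hMn inf_le_right)
      nlinarith [abs_nonneg (a N - β)]
    have hdecomp : (∫ x in (a 0)..a N, φ x) - ∫ x in α..β, φ x
        = (∫ x in (a 0)..α, φ x) + ∫ x in β..a N, φ x := by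
      rw [← h1, ← h2]; ring
    rw [hdecomp]
    calc |(∫ x in (a 0)..α, φ x) + ∫ x in β..a N, φ x|
        ≤ |(∫ x in (a 0)..α, φ x)| + |∫ x in β..a N, φ x| := abs_add_le _ _
      _ ≤ Mb * ε₂ + Mb * ε₂ := add_le_add e1 e2
      _ ≤ ε/4 := by rw [hε₂def]; exact aux_eps Mb ε hMb0 hε
  rw [Real.dist_eq, hsum]
  calc |(1/(n:ℝ)) * ∑ i ∈ Finset.range N, φ (a i) - ∫ x in α..β, φ x|
      ≤ |(1/(n:ℝ)) * ∑ i ∈ Finset.range N, φ (a i) - ∫ x in (a 0)..a N, φ x|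
        + |(∫ x in (a 0)..a N, φ x) - ∫ x in α..β, φ x| := abs_sub_le _ _ _
    _ ≤ ε/3 + ε/4 := add_le_add hRJ hJI
    _ < ε := by linarith

lemma aux_diff (S : Set (ℕ × ℤ)) (hS : S.Nonempty) (hadd : ∀ a ∈ S, ∀ b ∈ S, a + b ∈ S)
    (hgen : AddSubgroup.closure ((fun p : ℕ × ℤ => ((p.1 : ℤ), p.2)) '' S) = ⊤) :
    ∃ p ∈ S, ∃ q ∈ S, p.1 = q.1 ∧ p.2 = q.2 + 1 := by
  obtain ⟨x₀, hx₀⟩ := hS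
  set f : ℕ × ℤ → ℤ × ℤ := fun p => ((p.1 : ℤ), p.2) with hf
  have hfadd : ∀ x y : ℕ × ℤ, f (x + y) = f x + f y := by
    intro x y
    simp only [hf, Prod.ext_iff, Prod.fst_add, Prod.snd_add]
    refine ⟨by push_cast; ring, trivial⟩
  let G : AddSubgroup (ℤ × ℤ) :=
  { carrier := {z | ∃ x ∈ S, ∃ y ∈ S, z = f x - f y}
    zero_mem' := ⟨x₀, hx₀, x₀, hx₀, by simp⟩
    add_mem' := by
      rintro z w ⟨x, hx, y, hy, rfl⟩ ⟨x', hx', y', hy', rfl⟩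
      exact ⟨x + x', hadd _ hx _ hx', y + y', hadd _ hy _ hy',
        by rw [hfadd, hfadd]; abel⟩
    neg_mem' := by
      rintro z ⟨x, hx, y, hy, rfl⟩
      exact ⟨y, hy, x, hx, by abel⟩ }
  have hTG : (fun p : ℕ × ℤ => ((p.1 : ℤ), p.2)) '' S ⊆ G := by
    rintro z ⟨x, hx, rfl⟩
    exact ⟨x + x, hadd _ hx _ hx, x, hx, by rw [hfadd]; abel⟩
  have h01 : ((0,1) : ℤ × ℤ) ∈ G := by
    have hle : AddSubgroup.closure ((fun p : ℕ × ℤ => ((p.1 : ℤ), p.2)) '' S) ≤ G :=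
      (AddSubgroup.closure_le G).mpr hTG
    rw [hgen] at hle
    exact hle (AddSubgroup.mem_top _)
  obtain ⟨p, hpS, q, hqS, hpq⟩ := h01
  have h1 : (0 : ℤ) = (p.1 : ℤ) - (q.1 : ℤ) := congrArg Prod.fst hpq
  have h2 : (1 : ℤ) = p.2 - q.2 := congrArg Prod.snd hpq
  exact ⟨p, hpS, q, hqS, by omega, by omega⟩

lemma aux_fill (S : Set (ℕ × ℤ)) (hadd : ∀ a ∈ S, ∀ b ∈ S, a + b ∈ S)
    (a : ℕ) (b : ℤ) (hq : ((a, b) : ℕ × ℤ) ∈ S) (hp : ((a, b+1) : ℕ × ℤ) ∈ S) :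
    ∀ k j : ℕ, j ≤ k → ∀ x ∈ S, (((x.1 + k*a : ℕ), x.2 + (k:ℤ)*b + (j:ℤ)) : ℕ × ℤ) ∈ S := by
  intro k
  induction k with
  | zero =>
    intro j hj x hx
    interval_cases j
    simpa using hx
  | succ k ih =>
    intro j hj x hx
    rcases Nat.lt_or_ge j (k+1) with h | h
    · have hj' : j ≤ k := by omega
      have hmem := hadd _ (ih j hj' x hx) _ hq
      have heq : ((x.1 + k*a : ℕ), x.2 + (k:ℤ)*b + (j:ℤ)) + ((a, b) : ℕ × ℤ)
          = (((x.1 + (k+1)*a : ℕ), x.2 + ((k+1:ℕ):ℤ)*b + (j:ℤ)) : ℕ × ℤ) := by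
        simp only [Prod.ext_iff, Prod.fst_add, Prod.snd_add]
        constructor
        · ring_nf
        · push_cast; ring
      rwa [heq] at hmem
    · have hj' : j = k+1 := by omega
      subst hj'
      have hmem := hadd _ (ih k le_rfl x hx) _ hp
      have heq : ((x.1 + k*a : ℕ), x.2 + (k:ℤ)*b + (k:ℤ)) + ((a, b+1) : ℕ × ℤ)
          = (((x.1 + (k+1)*a : ℕ), x.2 + ((k+1:ℕ):ℤ)*b + ((k+1:ℕ):ℤ)) : ℕ × ℤ) := by
        simp only [Prod.ext_iff, Prod.fst_add, Prod.snd_add]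
        constructor
        · ring_nf
        · push_cast; ring
      rwa [heq] at hmem

lemma aux_interval (S : Set (ℕ × ℤ)) (hadd : ∀ a ∈ S, ∀ b ∈ S, a + b ∈ S)
    (a : ℕ) (b : ℤ) (hq : ((a, b) : ℕ × ℤ) ∈ S) (hp : ((a, b+1) : ℕ × ℤ) ∈ S)
    (n : ℕ) (m M : ℤ) (k : ℕ)
    (hm : ((n, m) : ℕ × ℤ) ∈ S) (hM : ((n, M) : ℕ × ℤ) ∈ S)
    (hk : (k:ℤ) = M - m) (hk1 : 1 ≤ k) :
    ∀ t : ℕ, 1 ≤ t → ∀ s : ℤ, (t:ℤ)*m + (k:ℤ)*b ≤ s → s ≤ (t:ℤ)*M + (k:ℤ)*b + (k:ℤ) →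
      (((t*n + k*a : ℕ), s) : ℕ × ℤ) ∈ S := by
  intro t
  induction t with
  | zero => intro h; omega
  | succ t ih =>
    intro _ s hlo hhi
    rcases Nat.eq_zero_or_pos t with ht0 | ht1
    · -- base case t+1 = 1
      subst ht0
      push_cast at hlo hhi
      rcases le_or_gt s (M + (k:ℤ)*b) with hc | hc
      · set j := (s - m - (k:ℤ)*b).toNat with hjdef
        have hj : (j:ℤ) = s - m - (k:ℤ)*b := Int.toNat_of_nonneg (by linarith)
        have hjk : j ≤ k := by omega
        have hmem := aux_fill S hadd a b hq hp k j hjk (n, m) hm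
        have heq : (((n, m) : ℕ × ℤ).1 + k*a, ((n, m) : ℕ × ℤ).2 + (k:ℤ)*b + (j:ℤ))
            = (((1*n + k*a : ℕ), s) : ℕ × ℤ) := by
          refine Prod.ext ?_ ?_
          · show n + k*a = 1*n + k*a
            ring
          · show m + (k:ℤ)*b + (j:ℤ) = s
            rw [hj]; ring
        rwa [heq] at hmem
      · set j := (s - M - (k:ℤ)*b).toNat with hjdef
        have hj : (j:ℤ) = s - M - (k:ℤ)*b := Int.toNat_of_nonneg (by linarith)
        have hjk : j ≤ k := by omega
        have hmem := aux_fill S hadd a b hq hp k j hjk (n, M) hM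
        have heq : (((n, M) : ℕ × ℤ).1 + k*a, ((n, M) : ℕ × ℤ).2 + (k:ℤ)*b + (j:ℤ))
            = (((1*n + k*a : ℕ), s) : ℕ × ℤ) := by
          refine Prod.ext ?_ ?_
          · show n + k*a = 1*n + k*a
            ring
          · show M + (k:ℤ)*b + (j:ℤ) = s
            rw [hj]; ring
        rwa [heq] at hmem
    · have htMm : (1:ℤ)*(M - m) ≤ (t:ℤ)*(M - m) := by
        apply mul_le_mul_of_nonneg_right
        · exact_mod_cast ht1
        · omega
      push_cast at hlo hhi
      rcases le_or_gt (s - m) ((t:ℤ)*M + (k:ℤ)*b + (k:ℤ)) with hc | hc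
      · have hmem := ih ht1 (s - m) (by push_cast; linarith) (by push_cast; linarith)
        have hmem2 := hadd _ hmem _ hm
        have heq : (((t*n + k*a : ℕ), s - m) : ℕ × ℤ) + ((n, m) : ℕ × ℤ)
            = ((((t+1)*n + k*a : ℕ), s) : ℕ × ℤ) := by
          refine Prod.ext ?_ ?_
          · show t*n + k*a + n = (t+1)*n + k*a
            ring
          · show s - m + m = s
            ring
        rwa [heq] at hmem2
      · have hlo2 : (t:ℤ)*m + (k:ℤ)*b ≤ s - M := by linarith
        have hhi2 : s - M ≤ (t:ℤ)*M + (k:ℤ)*b + (k:ℤ) := by linarith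
        have hmem := ih ht1 (s - M) (by push_cast; linarith) (by push_cast; linarith)
        have hmem2 := hadd _ hmem _ hM
        have heq : (((t*n + k*a : ℕ), s - M) : ℕ × ℤ) + ((n, M) : ℕ × ℤ)
            = ((((t+1)*n + k*a : ℕ), s) : ℕ × ℤ) := by
          refine Prod.ext ?_ ?_
          · show t*n + k*a + n = (t+1)*n + k*a
            ring
          · show s - M + M = s
            ring
        rwa [heq] at hmem2

theorem statement_14 (d g : ℤ) (hd : 1 ≤ d) (S : Set (ℕ × ℤ))
    (hadd : ∀ a ∈ S, ∀ b ∈ S, a + b ∈ S)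
    (hgen : AddSubgroup.closure ((fun p : ℕ × ℤ => ((p.1 : ℤ), p.2)) '' S) = ⊤)
    (hbdd : ∃ C : ℝ, ∀ p ∈ S, 1 ≤ p.1 → |(p.2 : ℝ)| ≤ C * p.1)
    (hslice : ∃ n₀ : ℕ, 1 ≤ n₀ ∧ ∀ n : ℕ, n₀ ≤ n →
      (sgSlice S n).Finite ∧ ((sgSlice S n).ncard : ℤ) = d * n - g + 1)
    (smin smax : ℝ)
    (hmin : Tendsto (fun n : ℕ => sInf (sgSliceR S n) / n) atTop (nhds smin))
    (hmax : Tendsto (fun n : ℕ => sSup (sgSliceR S n) / n) atTop (nhds smax))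
    (φ : ℝ → ℝ) (hφc : Continuous φ) (hφb : ∃ M : ℝ, ∀ x : ℝ, |φ x| ≤ M) :
    Tendsto (fun n : ℕ =>
        (1 / ((sgSlice S n).ncard : ℝ)) * ∑ᶠ s ∈ sgSlice S n, φ ((s : ℝ) / n))
      atTop (nhds ((1 / (d : ℝ)) * ∫ x in smin..smax, φ x)) := by
  classical
  obtain ⟨Mb, hMb⟩ := hφb
  have hMb0 : 0 ≤ Mb := (abs_nonneg _).trans (hMb 0)
  obtain ⟨n₀, hn₀1, hn₀⟩ := hslice
  set n₁ : ℕ := max n₀ (g.toNat + 1) with hn₁def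
  have hn₀n₁ : n₀ ≤ n₁ := le_max_left _ _
  have hn₁1 : 1 ≤ n₁ := le_trans hn₀1 hn₀n₁
  set m : ℕ → ℤ := fun n => sInf (sgSlice S n) with hmdef
  set M : ℕ → ℤ := fun n => sSup (sgSlice S n) with hMdef
  -- basic facts for n ≥ n₁
  have hfin : ∀ n, n₁ ≤ n → (sgSlice S n).Finite := fun n hn => (hn₀ n (le_trans hn₀n₁ hn)).1
  have hcard : ∀ n, n₁ ≤ n → ((sgSlice S n).ncard : ℤ) = d * n - g + 1 :=
    fun n hn => (hn₀ n (le_trans hn₀n₁ hn)).2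
  have hc2 : ∀ n, n₁ ≤ n → (2:ℤ) ≤ d * n - g + 1 := by
    intro n hn
    have h1 : (g.toNat : ℤ) + 1 ≤ (n : ℤ) := by
      have : g.toNat + 1 ≤ n := le_trans (le_max_right _ _) hn
      exact_mod_cast this
    have h2 : g ≤ (g.toNat : ℤ) := Int.self_le_toNat g
    have h3 : (1:ℤ)*n ≤ d*n := mul_le_mul_of_nonneg_right hd (Int.ofNat_nonneg n)
    linarith
  have hne : ∀ n, n₁ ≤ n → (sgSlice S n).Nonempty := by
    intro n hn
    rw [← Set.ncard_pos (hfin n hn)]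
    have h1 := hcard n hn
    have h2 := hc2 n hn
    have h3 : (0:ℤ) < ((sgSlice S n).ncard : ℤ) := by rw [h1]; linarith
    exact_mod_cast h3
  have hmmem : ∀ n, n₁ ≤ n → m n ∈ sgSlice S n := fun n hn => (hne n hn).csInf_mem (hfin n hn)
  have hMmem : ∀ n, n₁ ≤ n → M n ∈ sgSlice S n := fun n hn => (hne n hn).csSup_mem (hfin n hn)
  have hbtw : ∀ n, n₁ ≤ n → ∀ s ∈ sgSlice S n, m n ≤ s ∧ s ≤ M n := by
    intro n hn s hs
    exact ⟨csInf_le (hfin n hn).bddBelow hs, le_csSup (hfin n hn).bddAbove hs⟩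
  have hmMle : ∀ n, n₁ ≤ n → m n ≤ M n :=
    fun n hn => (hbtw n hn (m n) (hmmem n hn)).2
  have hsub : ∀ n, n₁ ≤ n → sgSlice S n ⊆ ↑(Finset.Icc (m n) (M n)) := by
    intro n hn s hs
    simp only [Finset.coe_Icc, Set.mem_Icc]
    exact hbtw n hn s hs
  have hcard_le : ∀ n, n₁ ≤ n → d * n - g + 1 ≤ M n - m n + 1 := by
    intro n hn
    have h1 : (sgSlice S n).ncard ≤ (Finset.Icc (m n) (M n)).card := by
      rw [← Set.ncard_coe_finset]
      exact Set.ncard_le_ncard (hsub n hn) (Finset.Icc (m n) (M n)).finite_toSet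
    rw [Int.card_Icc] at h1
    have h2 : ((sgSlice S n).ncard : ℤ) ≤ ((M n + 1 - m n).toNat : ℤ) := by exact_mod_cast h1
    rw [Int.toNat_of_nonneg (by linarith [hmMle n hn])] at h2
    have h3 := hcard n hn
    linarith
  have hmMlt : ∀ n, n₁ ≤ n → m n < M n := by
    intro n hn
    have h1 := hcard_le n hn
    have h2 := hc2 n hn
    linarith
  -- the group generation: find (a,b),(a,b+1) ∈ S
  obtain ⟨p, hpS, q, hqS, hpq1, hpq2⟩ :=
    aux_diff S ⟨(n₁, m n₁), hmmem n₁ le_rfl⟩ hadd hgen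
  set a : ℕ := q.1 with hadef
  set b : ℤ := q.2 with hbdef
  have hqab : ((a, b) : ℕ × ℤ) ∈ S := by rw [hadef, hbdef]; simpa using hqS
  have hpab : ((a, b+1) : ℕ × ℤ) ∈ S := by
    have : p = ((a, b+1) : ℕ × ℤ) := Prod.ext hpq1 hpq2
    rwa [← this]
  -- gap bound: M n - m n ≤ d n
  have hgap : ∀ n, n₁ ≤ n → M n - m n ≤ d * n := by
    intro n hn
    by_contra hcon
    push_neg at hcon
    set k : ℕ := (M n - m n).toNat with hkdef
    have hk : (k:ℤ) = M n - m n := Int.toNat_of_nonneg (by have := hmMlt n hn; omega)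
    have hk1 : 1 ≤ k := by have := hmMlt n hn; omega
    have hn1' : 1 ≤ n := le_trans hn₁1 hn
    have hcount : ∀ t : ℕ, 1 ≤ t → n₀ ≤ t*n + k*a →
        (t:ℤ)*(M n - m n) + k + 1 ≤ d*((t:ℤ)*n + (k:ℤ)*a) - g + 1 := by
      intro t ht hge
      have hsub2 : ↑(Finset.Icc ((t:ℤ)*m n + (k:ℤ)*b) ((t:ℤ)*M n + (k:ℤ)*b + (k:ℤ)))
          ⊆ sgSlice S (t*n + k*a) := by
        intro s hs
        simp only [Finset.coe_Icc, Set.mem_Icc] at hs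
        exact aux_interval S hadd a b hqab hpab n (m n) (M n) k
          (hmmem n hn) (hMmem n hn) hk hk1 t ht s hs.1 hs.2
      have hfin2 := (hn₀ _ hge).1
      have hcd2 := (hn₀ _ hge).2
      have h1 : (Finset.Icc ((t:ℤ)*m n + (k:ℤ)*b) ((t:ℤ)*M n + (k:ℤ)*b + (k:ℤ))).card
          ≤ (sgSlice S (t*n + k*a)).ncard := by
        rw [← Set.ncard_coe_finset]
        exact Set.ncard_le_ncard hsub2 hfin2
      rw [Int.card_Icc] at h1
      have h2 : ((t:ℤ)*M n + (k:ℤ)*b + (k:ℤ) + 1 - ((t:ℤ)*m n + (k:ℤ)*b))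
          = (t:ℤ)*(M n - m n) + k + 1 := by ring
      have h3 : (0:ℤ) ≤ (t:ℤ)*(M n - m n) + k + 1 := by
        have : (0:ℤ) ≤ (t:ℤ)*(M n - m n) :=
          mul_nonneg (Int.ofNat_nonneg t) (by omega)
        omega
      have h4 : (((t*n + k*a : ℕ):ℤ)) = (t:ℤ)*n + (k:ℤ)*a := by push_cast; ring
      rw [h2] at h1
      have h6 : ((((t:ℤ)*(M n - m n) + k + 1).toNat : ℤ))
          ≤ ((sgSlice S (t*n + k*a)).ncard : ℤ) := by exact_mod_cast h1
      rw [Int.toNat_of_nonneg h3] at h6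
      rw [hcd2, h4] at h6
      exact h6
    -- choose t large
    set T : ℤ := d*(k:ℤ)*(a:ℤ) - g - k with hTdef
    set t : ℕ := T.toNat + n₀ + 1 with htdef
    have ht1 : 1 ≤ t := by omega
    have htn : t ≤ t * n := Nat.le_mul_of_pos_right t (by omega)
    have hge : n₀ ≤ t*n + k*a := by omega
    have hineq := hcount t ht1 hge
    have hMn1 : d*n + 1 ≤ M n - m n := Int.add_one_le_iff.mpr hcon
    have hprod : (t:ℤ)*(d*n + 1) ≤ (t:ℤ)*(M n - m n) :=
      mul_le_mul_of_nonneg_left hMn1 (Int.ofNat_nonneg t)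
    have e2 : (t:ℤ)*(d*n+1) = d*(t:ℤ)*n + t := by ring
    have e3 : d*((t:ℤ)*n + (k:ℤ)*a) = d*(t:ℤ)*n + d*(k:ℤ)*(a:ℤ) := by ring
    have hfinal : (t:ℤ) ≤ T := by rw [hTdef]; linarith
    have : (T.toNat : ℤ) + n₀ + 1 ≤ T := by
      have : ((t:ℕ):ℤ) = (T.toNat : ℤ) + n₀ + 1 := by rw [htdef]; push_cast; ring
      omega
    omega
  -- identify sInf/sSup of sgSliceR
  have hinfR : ∀ n, n₁ ≤ n → sInf (sgSliceR S n) = ((m n : ℤ) : ℝ) := by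
    intro n hn
    apply le_antisymm
    · apply csInf_le ((hfin n hn).image _).bddBelow
      exact ⟨m n, hmmem n hn, rfl⟩
    · apply le_csInf ((hne n hn).image _)
      rintro y ⟨s, hs, rfl⟩
      show ((m n : ℤ) : ℝ) ≤ (s : ℝ)
      exact_mod_cast (hbtw n hn s hs).1
  have hsupR : ∀ n, n₁ ≤ n → sSup (sgSliceR S n) = ((M n : ℤ) : ℝ) := by
    intro n hn
    apply le_antisymm
    · apply csSup_le ((hne n hn).image _)
      rintro y ⟨s, hs, rfl⟩
      show (s : ℝ) ≤ ((M n : ℤ) : ℝ)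
      exact_mod_cast (hbtw n hn s hs).2
    · apply le_csSup ((hfin n hn).image _).bddAbove
      exact ⟨M n, hMmem n hn, rfl⟩
  have hmin' : Tendsto (fun n : ℕ => ((m n : ℤ) : ℝ)/n) atTop (nhds smin) := by
    apply hmin.congr'
    filter_upwards [eventually_ge_atTop n₁] with n hn
    rw [hinfR n hn]
  have hmax' : Tendsto (fun n : ℕ => ((M n : ℤ) : ℝ)/n) atTop (nhds smax) := by
    apply hmax.congr'
    filter_upwards [eventually_ge_atTop n₁] with n hn
    rw [hsupR n hn]
  have hle : ∀ᶠ n : ℕ in atTop, m n ≤ M n := by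
    filter_upwards [eventually_ge_atTop n₁] with n hn
    exact le_of_lt (hmMlt n hn)
  -- Riemann limit
  have hL1 := riemann_tendsto φ hφc Mb hMb smin smax m M hmin' hmax' hle
  -- c n
  set c : ℕ → ℝ := fun n => (d:ℝ)*n - g + 1 with hcdef
  have hcpos : ∀ n, n₁ ≤ n → (0:ℝ) < c n := by
    intro n hn
    have h1 := hc2 n hn
    have h2 : (2:ℝ) ≤ (d:ℝ)*n - g + 1 := by exact_mod_cast h1
    show (0:ℝ) < (d:ℝ)*n - g + 1
    linarith
  have hc_atTop : Tendsto c atTop atTop := by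
    have hcomp : Tendsto (fun n : ℕ => (n:ℝ) + (-(g:ℝ) + 1)) atTop atTop :=
      tendsto_atTop_add_const_right _ _ tendsto_natCast_atTop_atTop
    apply tendsto_atTop_mono' atTop _ hcomp
    filter_upwards with n
    have h3 : (1:ℝ)*n ≤ (d:ℝ)*n :=
      mul_le_mul_of_nonneg_right (by exact_mod_cast hd) (Nat.cast_nonneg n)
    show (n:ℝ) + (-(g:ℝ) + 1) ≤ (d:ℝ)*n - g + 1
    linarith
  have hcinv : Tendsto (fun n => 1 / c n) atTop (nhds 0) := by
    simp only [one_div]; exact hc_atTop.inv_tendsto_atTop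
  have hnc : Tendsto (fun n : ℕ => (n:ℝ) / c n) atTop (nhds (1/(d:ℝ))) := by
    have h1 : Tendsto (fun n : ℕ => c n / n) atTop (nhds (d:ℝ)) := by
      have h2 : Tendsto (fun n : ℕ => (d:ℝ) - ((g:ℝ) - 1) * (1/n)) atTop
          (nhds ((d:ℝ) - ((g:ℝ)-1) * 0)) :=
        (tendsto_const_nhds).sub ((tendsto_const_nhds).mul tendsto_one_div_atTop_nhds_zero_nat)
      rw [mul_zero, sub_zero] at h2
      apply h2.congr'
      filter_upwards [eventually_ge_atTop 1] with n hn
      have hn0 : (n:ℝ) ≠ 0 := by positivity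
      show (d:ℝ) - ((g:ℝ)-1) * (1/n) = ((d:ℝ)*n - g + 1) / n
      field_simp
      ring
    have h3 : Tendsto (fun n : ℕ => (c n / n)⁻¹) atTop (nhds ((d:ℝ)⁻¹)) := by
      apply h1.inv₀
      have : (0:ℝ) < d := by exact_mod_cast hd
      linarith
    rw [one_div]
    apply h3.congr'
    filter_upwards [eventually_ge_atTop n₁, eventually_ge_atTop 1] with n hn hn1
    have hn0 : (n:ℝ) ≠ 0 := by positivity
    have hcn := hcpos n hn
    rw [inv_div]
  -- error term
  set D : ℕ → ℝ := fun n => (∑ s ∈ Finset.Icc (m n) (M n), φ ((s:ℝ)/n))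
    - ∑ᶠ s ∈ sgSlice S n, φ ((s:ℝ)/n) with hDdef
  have hDbound : ∀ n, n₁ ≤ n → |D n| ≤ Mb * (g.toNat + 1) := by
    intro n hn
    set F : Finset ℤ := (hfin n hn).toFinset with hFdef
    have hFIcc : F ⊆ Finset.Icc (m n) (M n) := by
      intro s hs
      rw [hFdef, Set.Finite.mem_toFinset] at hs
      simp only [Finset.mem_Icc]
      exact hbtw n hn s hs
    have hfs : ∑ᶠ s ∈ sgSlice S n, φ ((s:ℝ)/n) = ∑ s ∈ F, φ ((s:ℝ)/n) := by
      have h := finsum_mem_coe_finset (fun s : ℤ => φ ((s:ℝ)/n)) ((hfin n hn).toFinset)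
      rw [Set.Finite.coe_toFinset] at h
      rw [hFdef]
      exact h
    have hDeq : D n = ∑ s ∈ Finset.Icc (m n) (M n) \ F, φ ((s:ℝ)/n) := by
      show (∑ s ∈ Finset.Icc (m n) (M n), φ ((s:ℝ)/n)) - (∑ᶠ s ∈ sgSlice S n, φ ((s:ℝ)/n))
          = ∑ s ∈ Finset.Icc (m n) (M n) \ F, φ ((s:ℝ)/n)
      rw [hfs, ← Finset.sum_sdiff hFIcc]
      ring
    have hcardF : (F.card : ℤ) = d*n - g + 1 := by
      rw [hFdef, ← Set.ncard_eq_toFinset_card _ (hfin n hn)]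
      exact hcard n hn
    have hcardsd : ((Finset.Icc (m n) (M n) \ F).card : ℤ) ≤ g := by
      have h2 := hgap n hn
      have h3 : F.card ≤ (Finset.Icc (m n) (M n)).card := Finset.card_le_card hFIcc
      have hge0 : (0:ℤ) ≤ M n + 1 - m n := by linarith [hmMle n hn]
      have e1 : ((Finset.Icc (m n) (M n)).card : ℤ) = M n + 1 - m n := by
        rw [Int.card_Icc]; exact Int.toNat_of_nonneg hge0
      have e2 : ((Finset.Icc (m n) (M n) \ F).card : ℤ)
          = ((Finset.Icc (m n) (M n)).card : ℤ) - (F.card : ℤ) := by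
        rw [Finset.card_sdiff_of_subset hFIcc, Nat.cast_sub h3]
      rw [e2, e1, hcardF]
      linarith
    rw [hDeq]
    calc |∑ s ∈ Finset.Icc (m n) (M n) \ F, φ ((s:ℝ)/n)|
        ≤ ∑ s ∈ Finset.Icc (m n) (M n) \ F, |φ ((s:ℝ)/n)| := Finset.abs_sum_le_sum_abs _ _
      _ ≤ ∑ _s ∈ Finset.Icc (m n) (M n) \ F, Mb := Finset.sum_le_sum (fun s _ => hMb _)
      _ = ((Finset.Icc (m n) (M n) \ F).card : ℝ) * Mb := by
          rw [Finset.sum_const, nsmul_eq_mul]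
      _ ≤ Mb * (g.toNat + 1) := by
          have h5 : ((Finset.Icc (m n) (M n) \ F).card : ℝ) ≤ (g.toNat : ℝ) + 1 := by
            have : ((Finset.Icc (m n) (M n) \ F).card : ℤ) ≤ (g.toNat : ℤ) + 1 := by
              have := Int.self_le_toNat g
              omega
            exact_mod_cast this
          nlinarith [abs_nonneg (D n)]
  have hDzero : Tendsto (fun n => (1 / c n) * D n) atTop (nhds 0) := by
    apply squeeze_zero_norm' (a := fun n => (1/c n) * (Mb * ((g.toNat:ℝ) + 1)))
    · filter_upwards [eventually_ge_atTop n₁] with n hn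
      rw [Real.norm_eq_abs, abs_mul]
      have hpos := hcpos n hn
      have h1 : |1 / c n| = 1 / c n := abs_of_pos (by positivity)
      rw [h1]
      apply mul_le_mul_of_nonneg_left (hDbound n hn) (by positivity)
    · simpa using hcinv.mul_const (Mb * ((g.toNat:ℝ) + 1))
  -- assemble
  have hmain : Tendsto (fun n : ℕ => ((n:ℝ)/c n) * ((1/(n:ℝ)) * ∑ s ∈ Finset.Icc (m n) (M n),
      φ ((s:ℝ)/n)) - (1/c n) * D n) atTop
      (nhds ((1/(d:ℝ)) * (∫ x in smin..smax, φ x) - 0)) := (hnc.mul hL1).sub hDzero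
  rw [sub_zero] at hmain
  apply hmain.congr'
  filter_upwards [eventually_ge_atTop n₁, eventually_ge_atTop 1] with n hn hn1
  have hn0 : (n:ℝ) ≠ 0 := by positivity
  have hcn : c n ≠ 0 := ne_of_gt (hcpos n hn)
  have hnum : ((sgSlice S n).ncard : ℝ) = c n := by
    show ((sgSlice S n).ncard : ℝ) = (d:ℝ)*n - g + 1
    exact_mod_cast hcard n hn
  show ((n:ℝ)/c n) * ((1/(n:ℝ)) * ∑ s ∈ Finset.Icc (m n) (M n), φ ((s:ℝ)/n))
        - (1/c n) * ((∑ s ∈ Finset.Icc (m n) (M n), φ ((s:ℝ)/n))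
          - ∑ᶠ s ∈ sgSlice S n, φ ((s:ℝ)/n))
      = (1 / ((sgSlice S n).ncard : ℝ)) * ∑ᶠ s ∈ sgSlice S n, φ ((s : ℝ) / n)
  rw [hnum]
  field_simp
  ring
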